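/- Let T be a finite set of τ-closed, similar iterative τ-multi-polynomials (each self-dependent component of each member has the form xᵢ + τ·(polynomial in lower-indexed self-dependent variables), and all members have the same abstraction after τ := 1 and coefficient flattening). Then the closure of T under the τ-absorbing composition ⋆, namely T^★ = ⋃_{k≥1} T^{⋆(k)} where T^{⋆(k+1)} = T^{⋆(k)} ∪ { q ⋆ p : q ∈ T, p ∈ T^{⋆(k)} }, is a finite set. -/

import Mathlib

open MvPolynomial

/-- Variable set for τ-polynomials: `n` program variables plus the extra variable τ. -/
abbrev Vn (n : ℕ) := Fin n ⊕ Unit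

open Classical in
/-- The linear part `Lin(r)`: the sum of monomials of `r` of the form `a·xᵢ`
(linear in a single program variable, τ-free). -/
noncomputable def linPart {n : ℕ} (r : MvPolynomial (Vn n) ℕ) : MvPolynomial (Vn n) ℕ :=
  ∑ m ∈ r.support.filter (fun m => ∃ i : Fin n, m = Finsupp.single (Sum.inl i) 1),
    monomial m (r.coeff m)

open Classical in
/-- The non-linear part `NonLin(r)`: all remaining monomials, so `r = Lin(r) + NonLin(r)`. -/
noncomputable def nonLinPart {n : ℕ} (r : MvPolynomial (Vn n) ℕ) : MvPolynomial (Vn n) ℕ :=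
  ∑ m ∈ r.support.filter (fun m => ¬ ∃ i : Fin n, m = Finsupp.single (Sum.inl i) 1),
    monomial m (r.coeff m)

/-- Evaluation of a τ-polynomial at `x ∈ ℕⁿ` and `τ = t`, as a real number. -/
noncomputable def evalR {n : ℕ} (r : MvPolynomial (Vn n) ℕ) (x : Fin n → ℕ) (t : ℕ) : ℝ :=
  aeval (Sum.elim (fun i => (x i : ℝ)) (fun _ => (t : ℝ))) r

/-- `c⋄r = Lin(r) + c·NonLin(r)`, evaluated at `(x, t)`. -/
noncomputable def cDia {n : ℕ} (c : ℝ) (r : MvPolynomial (Vn n) ℕ)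
    (x : Fin n → ℕ) (t : ℕ) : ℝ :=
  evalR (linPart r) x t + c * evalR (nonLinPart r) x t

/-- Composition `r ∘ p`: substitute `p[i]` for `xᵢ` in `r`, leaving τ fixed. -/
noncomputable def tcomp {n : ℕ} (r : MvPolynomial (Vn n) ℕ)
    (p : Fin n → MvPolynomial (Vn n) ℕ) : MvPolynomial (Vn n) ℕ :=
  bind₁ (Sum.elim p (fun _ => X (Sum.inr ()))) r

/-- Evaluation of a τ-multi-polynomial component over ℕ at `(x, t)`. -/
noncomputable def evalN {n : ℕ} (r : MvPolynomial (Vn n) ℕ) (x : Fin n → ℕ) (t : ℕ) : ℕ :=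
  eval (Sum.elim x (fun _ => t)) r


/-- The abstraction map `α`: replace every nonzero coefficient by `1`. -/
noncomputable def absP {σ : Type*} (p : MvPolynomial σ ℕ) : MvPolynomial σ ℕ :=
  ∑ m ∈ p.support, monomial m 1

/-- `⌊q⌋ = α(q[1/τ])`: substitute `1` for τ, then flatten coefficients to 0/1. -/
noncomputable def flat {n : ℕ} (q : MvPolynomial (Vn n) ℕ) : MvPolynomial (Fin n) ℕ :=
  absP (aeval (Sum.elim X (fun _ => 1)) q)

/-- The join `p ⊔ q`: coefficientwise maximum. -/
noncomputable def pjoin {σ : Type*} [DecidableEq σ] (p q : MvPolynomial σ ℕ) : MvPolynomial σ ℕ :=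
  ∑ m ∈ p.support ∪ q.support, monomial m (max (p.coeff m) (q.coeff m))

/-- A weighted trace: a list of steps, each a τ-multi-polynomial with a weight. -/
abbrev WTrace (n : ℕ) := List ((Fin n → MvPolynomial (Vn n) ℕ) × ℕ)

/-- A concrete execution of a weighted trace: each step applies its
multi-polynomial with its weight substituted for τ. -/
noncomputable def runW {n : ℕ} (σ : WTrace n) (x : Fin n → ℕ) : Fin n → ℕ :=
  σ.foldl (fun s fw => fun i => eval (Sum.elim s (fun _ => fw.2)) (fw.1 i)) x

/-- The weight of a trace: the sum of the step weights. -/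
def wgt {n : ℕ} (σ : WTrace n) : ℕ := (σ.map Prod.snd).sum

/-- `p` bounds the weighted trace `σ`: for every concrete execution of `σ` from
`x` ending in `y` and every `t ≥ wgt σ`, `y ≤ p(x,t)` componentwise. -/
def boundsTr {n : ℕ} (p : Fin n → MvPolynomial (Vn n) ℕ) (σ : WTrace n) : Prop :=
  ∀ x : Fin n → ℕ, ∀ t : ℕ, wgt σ ≤ t → ∀ i,
    runW σ x i ≤ eval (Sum.elim x (fun _ => t)) (p i)

open Classical in
/-- For a τ-closed iterative component `f = xᵢ + τ·f′`, extract `f′`: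
drop the monomial `xᵢ` and divide the remaining monomials by τ. -/
noncomputable def primeOf {n : ℕ} (f : MvPolynomial (Vn n) ℕ) (i : Fin n) :
    MvPolynomial (Vn n) ℕ :=
  ∑ m ∈ f.support.filter (fun m => m ≠ Finsupp.single (Sum.inl i) 1),
    monomial (m - Finsupp.single (Sum.inr ()) 1) (f.coeff m)

open Classical in
/-- τ-absorbing composition `q ⋆ p` (relative to the common abstraction `A`,
which determines the self-dependent indices):
`(q ⋆ p)[i] = xᵢ + τ·(p[i]′ ⊔ (q[i]′ ∘ p))` for self-dependent `i`,
and `(q ⋆ p)[i] = q[i] ∘ p` otherwise. -/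
noncomputable def starComp {n : ℕ} (A : Fin n → MvPolynomial (Fin n) ℕ)
    (q p : Fin n → MvPolynomial (Vn n) ℕ) : Fin n → MvPolynomial (Vn n) ℕ :=
  fun i =>
    if i ∈ (A i).vars then
      X (Sum.inl i) + X (Sum.inr ()) * pjoin (primeOf (p i) i) (tcomp (primeOf (q i) i) p)
    else tcomp (q i) p

/-- `T^{⋆(k)}`: `T^{⋆(1)} = T` and `T^{⋆(k+1)} = T^{⋆(k)} ∪ {q ⋆ p : q ∈ T, p ∈ T^{⋆(k)}}`. -/
def starPow {n : ℕ} (A : Fin n → MvPolynomial (Fin n) ℕ)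
    (T : Set (Fin n → MvPolynomial (Vn n) ℕ)) :
    ℕ → Set (Fin n → MvPolynomial (Vn n) ℕ)
  | 0 => T
  | k + 1 => starPow A T k ∪
      {r | ∃ q ∈ T, ∃ p ∈ starPow A T k, r = starComp A q p}


/- ### Auxiliary machinery for the Finite Closure Lemma -/

section FCLaux

/-- Coefficientwise order on `ℕ`-polynomials. -/
def fclLe {σ : Type*} (p q : MvPolynomial σ ℕ) : Prop := ∃ d, q = p + d

theorem fclLe_refl {σ : Type*} (p : MvPolynomial σ ℕ) : fclLe p p := ⟨0, by simp⟩

theorem fclLe_trans {σ : Type*} {p q r : MvPolynomial σ ℕ} (h : fclLe p q) (h' : fclLe q r) :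
    fclLe p r := by
  obtain ⟨d, rfl⟩ := h; obtain ⟨e, rfl⟩ := h'; exact ⟨d + e, by rw [add_assoc]⟩

theorem fclLe_add {σ : Type*} {a b c d : MvPolynomial σ ℕ} (h : fclLe a b) (h' : fclLe c d) :
    fclLe (a + c) (b + d) := by
  obtain ⟨u, rfl⟩ := h; obtain ⟨v, rfl⟩ := h'; exact ⟨u + v, by ring⟩

theorem fclLe_mul {σ : Type*} {a b c d : MvPolynomial σ ℕ} (h : fclLe a b) (h' : fclLe c d) :
    fclLe (a * c) (b * d) := by
  obtain ⟨u, rfl⟩ := h; obtain ⟨v, rfl⟩ := h'; exact ⟨a * v + u * c + u * v, by ring⟩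

theorem fclLe_add_right {σ : Type*} (a b : MvPolynomial σ ℕ) : fclLe a (a + b) := ⟨b, rfl⟩

theorem fclLe_coeff {σ : Type*} {p q : MvPolynomial σ ℕ} (h : fclLe p q) (m : σ →₀ ℕ) :
    coeff m p ≤ coeff m q := by
  obtain ⟨d, rfl⟩ := h; simp [coeff_add]

theorem fclLe_of_coeff {σ : Type*} {p q : MvPolynomial σ ℕ}
    (h : ∀ m, coeff m p ≤ coeff m q) : fclLe p q := by
  classical
  refine ⟨∑ m ∈ q.support, monomial m (coeff m q - coeff m p), ?_⟩
  ext m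
  rw [coeff_add, coeff_sum]
  simp only [coeff_monomial]
  rw [Finset.sum_ite_eq' q.support m (fun m => coeff m q - coeff m p)]
  have hh := h m
  by_cases hm : m ∈ q.support
  · simp only [hm, if_true]
    omega
  · have hq : coeff m q = 0 := by simpa [mem_support_iff] using hm
    simp [hq] at hh ⊢
    omega

theorem fclLe_sum {σ α : Type*} [DecidableEq α] (s : Finset α) (F : α → MvPolynomial σ ℕ)
    {a : α} (ha : a ∈ s) : fclLe (F a) (∑ x ∈ s, F x) :=
  ⟨∑ x ∈ s.erase a, F x, (Finset.add_sum_erase s F ha).symm⟩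

theorem fclLe_tcomp_mono {n : ℕ} (r : MvPolynomial (Vn n) ℕ)
    {p p' : Fin n → MvPolynomial (Vn n) ℕ} (h : ∀ j, fclLe (p j) (p' j)) :
    fclLe (tcomp r p) (tcomp r p') := by
  induction r using MvPolynomial.induction_on with
  | C a => simp only [tcomp, algHom_C]; exact fclLe_refl _
  | add f g hf hg => simp only [tcomp, map_add] at *; exact fclLe_add hf hg
  | mul_X f s hf =>
    simp only [tcomp, map_mul, bind₁_X_right] at *
    refine fclLe_mul hf ?_
    cases s with
    | inl j => exact h j
    | inr u => exact fclLe_refl _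

theorem fclTcomp_congr {n : ℕ} (r : MvPolynomial (Vn n) ℕ)
    {p p' : Fin n → MvPolynomial (Vn n) ℕ}
    (h : ∀ j : Fin n, (Sum.inl j : Vn n) ∈ r.vars → p j = p' j) :
    tcomp r p = tcomp r p' := by
  simp only [tcomp, bind₁, aeval_def]
  apply eval₂_congr
  intro i c hic hc
  cases i with
  | inl j => simp [h j ((mem_vars _).2 ⟨c, mem_support_iff.2 hc, hic⟩)]
  | inr u => rfl

theorem fclLe_pjoin {σ : Type*} [DecidableEq σ] {a b c : MvPolynomial σ ℕ}
    (ha : fclLe a c) (hb : fclLe b c) : fclLe (pjoin a b) c := by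
  apply fclLe_of_coeff
  intro m
  rw [pjoin, coeff_sum]
  simp only [coeff_monomial]
  rw [Finset.sum_ite_eq' _ m]
  split
  · exact max_le (fclLe_coeff ha m) (fclLe_coeff hb m)
  · exact Nat.zero_le _

theorem fclPrimeOf_eq {n : ℕ} (i : Fin n) (r : MvPolynomial (Vn n) ℕ) :
    primeOf (X (Sum.inl i) + X (Sum.inr ()) * r) i = r := by
  classical
  set ei : Vn n →₀ ℕ := Finsupp.single (Sum.inl i) 1 with hei
  set eτ : Vn n →₀ ℕ := Finsupp.single (Sum.inr ()) 1 with heτ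
  have hne : ∀ m' : Vn n →₀ ℕ, eτ + m' ≠ ei := by
    intro m' h
    have := congrFun (congrArg (fun g : Vn n →₀ ℕ => (g : Vn n → ℕ)) h) (Sum.inr ())
    simp [heτ, hei, Finsupp.single_apply] at this
  have hdisj : Disjoint (X (Sum.inl i) : MvPolynomial (Vn n) ℕ).support
      (X (Sum.inr ()) * r : MvPolynomial (Vn n) ℕ).support := by
    rw [support_X, support_X_mul]
    simp only [Finset.disjoint_left, Finset.mem_singleton, Finset.mem_map,
      addLeftEmbedding_apply]
    rintro a rfl ⟨m', _, hm'⟩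
    exact hne m' hm'
  have hsupp : (X (Sum.inl i) + X (Sum.inr ()) * r : MvPolynomial (Vn n) ℕ).support
      = {ei} ∪ r.support.map (addLeftEmbedding eτ) := by
    rw [show (X (Sum.inl i) + X (Sum.inr ()) * r : MvPolynomial (Vn n) ℕ).support
      = (X (Sum.inl i) : MvPolynomial (Vn n) ℕ).support
        ∪ (X (Sum.inr ()) * r : MvPolynomial (Vn n) ℕ).support
      from Finsupp.support_add_eq hdisj, support_X, support_X_mul]
  have hcoe : ∀ m' : Vn n →₀ ℕ,
      coeff (eτ + m') (X (Sum.inl i) + X (Sum.inr ()) * r) = coeff m' r := by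
    intro m'
    rw [coeff_add, coeff_X_mul]
    have : coeff (eτ + m') (X (Sum.inl i) : MvPolynomial (Vn n) ℕ) = 0 := by
      rw [coeff_X', if_neg]
      exact fun h => hne m' h.symm
    omega
  rw [primeOf, hsupp]
  have hfilter : ({ei} ∪ r.support.map (addLeftEmbedding eτ)).filter (fun m => m ≠ ei)
      = r.support.map (addLeftEmbedding eτ) := by
    rw [Finset.filter_union, Finset.filter_singleton]
    simp only [ne_eq, not_true_eq_false, ite_false, Finset.empty_union]
    rw [Finset.filter_eq_self]
    simp only [Finset.mem_map, addLeftEmbedding_apply, not_true_eq_false]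
    rintro m ⟨m', _, rfl⟩
    exact hne m'
  rw [hfilter, Finset.sum_map]
  simp only [addLeftEmbedding_apply]
  conv_rhs => rw [r.as_sum]
  apply Finset.sum_congr rfl
  intro m' _
  rw [add_tsub_cancel_left, hcoe]

/-- `MvPolynomial` to `Finsupp`, to borrow the locally-finite order on `Finsupp`. -/
noncomputable def fclToFs {σ : Type*} (p : MvPolynomial σ ℕ) : (σ →₀ ℕ) →₀ ℕ :=
  ⟨p.support, fun m => coeff m p, fun m => by simp [mem_support_iff]⟩

theorem fclFinite_le {σ : Type*} (P : MvPolynomial σ ℕ) :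
    {r : MvPolynomial σ ℕ | fclLe r P}.Finite := by
  classical
  have hinj : Function.Injective (fclToFs (σ := σ)) := by
    intro p q h
    ext m
    exact congrFun (congrArg (fun g : (σ →₀ ℕ) →₀ ℕ => (g : (σ →₀ ℕ) → ℕ)) h) m
  have hfin : (Set.Iic (fclToFs P)).Finite := by
    have : Set.Iic (fclToFs P) = Set.Icc 0 (fclToFs P) := by
      ext f; simp [Set.mem_Icc, zero_le]
    rw [this]
    exact Set.finite_Icc _ _
  refine (hfin.preimage hinj.injOn).subset ?_
  intro r hr
  simp only [Set.mem_preimage, Set.mem_Iic]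
  intro m
  exact fclLe_coeff hr m

/-- The recursively-defined bound on primed parts of self-dependent components. -/
noncomputable def fclJ {n : ℕ} (A : Fin n → MvPolynomial (Fin n) ℕ)
    (Tf : Finset (Fin n → MvPolynomial (Vn n) ℕ)) (i : Fin n) : MvPolynomial (Vn n) ℕ :=
  ∑ q ∈ Tf, (primeOf (q i) i + tcomp (primeOf (q i) i)
    (fun j => if h : j ∈ (A j).vars ∧ j < i then
        X (Sum.inl j) + X (Sum.inr ()) * fclJ A Tf j else 0))
termination_by i.1
decreasing_by exact h.2

/-- The truncated bound vector used inside compositions. -/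
noncomputable def fclBlow {n : ℕ} (A : Fin n → MvPolynomial (Fin n) ℕ)
    (Tf : Finset (Fin n → MvPolynomial (Vn n) ℕ)) (i : Fin n) :
    Fin n → MvPolynomial (Vn n) ℕ := fun j =>
  if j ∈ (A j).vars ∧ j < i then X (Sum.inl j) + X (Sum.inr ()) * fclJ A Tf j else 0

theorem fclJ_eq {n : ℕ} (A : Fin n → MvPolynomial (Fin n) ℕ)
    (Tf : Finset (Fin n → MvPolynomial (Vn n) ℕ)) (i : Fin n) :
    fclJ A Tf i
      = ∑ q ∈ Tf, (primeOf (q i) i + tcomp (primeOf (q i) i) (fclBlow A Tf i)) := by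
  rw [fclJ]; rfl

/-- Bound for non-self-dependent components. -/
noncomputable def fclK {n : ℕ} (A : Fin n → MvPolynomial (Fin n) ℕ)
    (Tf : Finset (Fin n → MvPolynomial (Vn n) ℕ)) (i : Fin n) : MvPolynomial (Vn n) ℕ :=
  ∑ q ∈ Tf, (q i + tcomp (q i) (fclBlow A Tf i))

/-- The invariant maintained by `⋆`-composition. -/
def fclInv {n : ℕ} (A : Fin n → MvPolynomial (Fin n) ℕ)
    (Tf : Finset (Fin n → MvPolynomial (Vn n) ℕ))
    (p : Fin n → MvPolynomial (Vn n) ℕ) : Prop :=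
  ∀ i : Fin n,
    (i ∈ (A i).vars → ∃ r, p i = X (Sum.inl i) + X (Sum.inr ()) * r ∧ fclLe r (fclJ A Tf i)) ∧
    (i ∉ (A i).vars → fclLe (p i) (fclK A Tf i))

theorem fclLe_tcomp_blow {n : ℕ} (A : Fin n → MvPolynomial (Fin n) ℕ)
    (Tf : Finset (Fin n → MvPolynomial (Vn n) ℕ))
    {p : Fin n → MvPolynomial (Vn n) ℕ} (hp : fclInv A Tf p) (i : Fin n)
    {r : MvPolynomial (Vn n) ℕ}
    (hvars : ∀ j : Fin n, (Sum.inl j : Vn n) ∈ r.vars → j ∈ (A j).vars ∧ j < i) :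
    fclLe (tcomp r p) (tcomp r (fclBlow A Tf i)) := by
  classical
  have h1 : tcomp r p
      = tcomp r (fun j => if j ∈ (A j).vars ∧ j < i then p j else 0) := by
    apply fclTcomp_congr
    intro j hj
    rw [if_pos (hvars j hj)]
  rw [h1]
  apply fclLe_tcomp_mono
  intro j
  by_cases hc : j ∈ (A j).vars ∧ j < i
  · rw [if_pos hc]
    rw [show fclBlow A Tf i j = X (Sum.inl j) + X (Sum.inr ()) * fclJ A Tf j
      from if_pos hc]
    obtain ⟨rj, hrj, hle⟩ := (hp j).1 hc.1
    rw [hrj]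
    exact fclLe_add (fclLe_refl _) (fclLe_mul (fclLe_refl _) hle)
  · rw [if_neg hc, show fclBlow A Tf i j = 0 from if_neg hc]
    exact fclLe_refl _

end FCLaux

/-- Finite Closure Lemma: for a finite set `T` of τ-closed, similar iterative
τ-multi-polynomials, the closure `T^★ = ⋃ₖ T^{⋆(k)}` under τ-absorbing
composition is finite. -/
theorem stmt14 {n : ℕ} (A : Fin n → MvPolynomial (Fin n) ℕ)
    (T : Set (Fin n → MvPolynomial (Vn n) ℕ)) (hfin : T.Finite)
    (hsim : ∀ f ∈ T, ∀ i, flat (f i) = A i)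
    (hiter : ∀ f ∈ T, ∀ i j : Fin n,
      (Sum.inl j : Vn n) ∈ (f i).vars → j ∈ (A j).vars ∧ j ≤ i)
    (hclosed : ∀ f ∈ T, ∀ i : Fin n, i ∈ (A i).vars →
      ∃ r : MvPolynomial (Vn n) ℕ,
        f i = X (Sum.inl i) + X (Sum.inr ()) * r ∧
        ∀ j : Fin n, (Sum.inl j : Vn n) ∈ r.vars → j ∈ (A j).vars ∧ j < i) :
    (⋃ k, starPow A T k).Finite := by
  classical
  set Tf := hfin.toFinset with hTf
  have hmem : ∀ q, q ∈ T → q ∈ Tf := fun q hq => hfin.mem_toFinset.2 hq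
  have hinv : ∀ k, ∀ p ∈ starPow A T k, fclInv A Tf p := by
    intro k
    induction k with
    | zero =>
      intro p hp i
      constructor
      · intro hi
        obtain ⟨r, hpi, hvars⟩ := hclosed p hp i hi
        refine ⟨r, hpi, ?_⟩
        have hg : fclLe (primeOf (p i) i) (fclJ A Tf i) := by
          rw [fclJ_eq]
          exact fclLe_trans (fclLe_add_right _ _) (fclLe_sum Tf _ (hmem p hp))
        rwa [hpi, fclPrimeOf_eq] at hg
      · intro hi
        show fclLe (p i) (∑ q ∈ Tf, (q i + tcomp (q i) (fclBlow A Tf i)))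
        exact fclLe_trans (fclLe_add_right _ _) (fclLe_sum Tf _ (hmem p hp))
    | succ k ih =>
      intro p hp
      rcases hp with hp | ⟨q, hq, p0, hp0, rfl⟩
      · exact ih p hp
      · have hq' : q ∈ Tf := hmem q hq
        have hinv0 := ih p0 hp0
        intro i
        constructor
        · intro hi
          obtain ⟨rq, hqi, hvq⟩ := hclosed q hq i hi
          have hprq : primeOf (q i) i = rq := by rw [hqi, fclPrimeOf_eq]
          refine ⟨pjoin (primeOf (p0 i) i) (tcomp (primeOf (q i) i) p0), ?_, ?_⟩
          · show (if i ∈ (A i).vars then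
                X (Sum.inl i) + X (Sum.inr ()) * pjoin (primeOf (p0 i) i)
                  (tcomp (primeOf (q i) i) p0)
              else tcomp (q i) p0) = _
            rw [if_pos hi]
          · apply fclLe_pjoin
            · obtain ⟨rp, hpi, hle⟩ := (hinv0 i).1 hi
              rw [hpi, fclPrimeOf_eq]
              exact hle
            · have hb : fclLe (tcomp (primeOf (q i) i) p0)
                  (tcomp (primeOf (q i) i) (fclBlow A Tf i)) := by
                apply fclLe_tcomp_blow A Tf hinv0 i
                rw [hprq]
                exact hvq
              refine fclLe_trans hb ?_
              rw [fclJ_eq]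
              exact fclLe_trans ⟨_, add_comm _ _⟩ (fclLe_sum Tf _ hq')
        · intro hi
          have hsc : starComp A q p0 i = tcomp (q i) p0 := by
            show (if i ∈ (A i).vars then
                X (Sum.inl i) + X (Sum.inr ()) * pjoin (primeOf (p0 i) i)
                  (tcomp (primeOf (q i) i) p0)
              else tcomp (q i) p0) = _
            rw [if_neg hi]
          rw [hsc]
          have hvars : ∀ j : Fin n, (Sum.inl j : Vn n) ∈ (q i).vars →
              j ∈ (A j).vars ∧ j < i := by
            intro j hj
            obtain ⟨h1, h2⟩ := hiter q hq i j hj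
            exact ⟨h1, lt_of_le_of_ne h2 (fun h => hi (h ▸ h1))⟩
          refine fclLe_trans (fclLe_tcomp_blow A Tf hinv0 i hvars) ?_
          show fclLe _ (∑ q' ∈ Tf, (q' i + tcomp (q' i) (fclBlow A Tf i)))
          exact fclLe_trans ⟨_, add_comm _ _⟩ (fclLe_sum Tf _ hq')
  have hsub : (⋃ k, starPow A T k) ⊆ Set.pi Set.univ (fun i =>
      {r | fclLe r (if i ∈ (A i).vars then
        X (Sum.inl i) + X (Sum.inr ()) * fclJ A Tf i else fclK A Tf i)}) := by
    intro p hp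
    obtain ⟨k, hk⟩ := Set.mem_iUnion.1 hp
    have h := hinv k p hk
    intro i _
    by_cases hi : i ∈ (A i).vars
    · obtain ⟨r, hpi, hle⟩ := (h i).1 hi
      simp only [Set.mem_setOf_eq, if_pos hi]
      rw [hpi]
      exact fclLe_add (fclLe_refl _) (fclLe_mul (fclLe_refl _) hle)
    · simp only [Set.mem_setOf_eq, if_neg hi]
      exact (h i).2 hi
  exact (Set.Finite.pi (fun i => fclFinite_le _)).subset hsub
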